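/- arXiv:1311.2242 — 2 statements merged into one kernel-verified Lean document; each statement's English description precedes it below -/
import Mathlib

section
/- Let p be an odd prime. Then p is a Wilson prime if and only if B_{p-1} − 1 + 1/p ≡ 0 (mod p), i.e. the rational number B_{p-1} − 1 + 1/p equals p·(a/b) for some integers a, b with p ∤ b. -/
open Finset

/-- `x ≡ y (mod p^k)` for rationals: `x - y = p^k * (c/d)` with `p ∤ d`. -/
def ratCongr (p k : ℕ) (x y : ℚ) : Prop :=
  ∃ c d : ℤ, ¬ (p : ℤ) ∣ d ∧ x - y = (p : ℚ) ^ k * ((c : ℚ) / (d : ℚ))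

/-- The Wilson quotient `W_p = ((p-1)! + 1)/p` (an integer by Wilson's theorem). -/
def wilsonQuotient (p : ℕ) : ℤ := ((Nat.factorial (p - 1) : ℤ) + 1) / p

/-- The Fermat quotient `q_p(a) = (a^(p-1) - 1)/p` (an integer for `p ∤ a`). -/
def fermatQuotient (p a : ℕ) : ℤ := ((a : ℤ) ^ (p - 1) - 1) / p

/-- A prime `p` is a Wilson prime if `p ∣ W_p`. -/
def IsWilsonPrime (p : ℕ) : Prop := (p : ℤ) ∣ wilsonQuotient p

/-- A prime `p` is a Lerch prime if `∑_{a=1}^{p-1} q_p(a) ≡ W_p (mod p²)`. -/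
def IsLerchPrime (p : ℕ) : Prop :=
  (p : ℤ) ^ 2 ∣ (∑ a ∈ Icc 1 (p - 1), fermatQuotient p a) - wilsonQuotient p

/-- The harmonic number `H_a = ∑_{k=1}^{a} 1/k`. -/
def harmonicNum (a : ℕ) : ℚ := ∑ k ∈ Icc 1 a, (1 : ℚ) / k

/-- The generalized harmonic number `H_{a,2} = ∑_{k=1}^{a} 1/k²`. -/
def harmonicNum2 (a : ℕ) : ℚ := ∑ k ∈ Icc 1 a, (1 : ℚ) / (k : ℚ) ^ 2

section Aux
set_option linter.unusedSectionVars false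
variable {p : ℕ} [hp : Fact p.Prime]

lemma zmod_p_sq : ((p : ZMod (p ^ 2)) * p = 0) := by
  have h : ((p ^ 2 : ℕ) : ZMod (p ^ 2)) = 0 := ZMod.natCast_self _
  push_cast at h
  linear_combination h

lemma one_add_pow (u : ZMod (p ^ 2)) (hu : u * u = 0) (n : ℕ) :
    (1 + u) ^ n = 1 + (n : ZMod (p ^ 2)) * u := by
  induction n with
  | zero => simp
  | succ n ih =>
    have hstep : (1 + u) ^ (n + 1) = (1 + u) ^ n * (1 + u) := pow_succ _ _
    rw [hstep, ih]
    push_cast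
    linear_combination (n : ZMod (p ^ 2)) * hu

lemma prod_one_add_mul {ι : Type*} (s : Finset ι) (f : ι → ZMod (p ^ 2)) :
    ∏ a ∈ s, (1 + (p : ZMod (p ^ 2)) * f a) = 1 + (p : ZMod (p ^ 2)) * ∑ a ∈ s, f a := by
  classical
  induction s using Finset.induction with
  | empty => simp
  | insert _ _ h ih =>
    rw [Finset.prod_insert h, ih, Finset.sum_insert h]
    linear_combination (f _ * ∑ x ∈ _, f x) * zmod_p_sq (p := p)

lemma wilson_eq : (p : ℤ) * wilsonQuotient p = (Nat.factorial (p - 1) : ℤ) + 1 := by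
  have hdvd : (p : ℤ) ∣ (Nat.factorial (p - 1) : ℤ) + 1 := by
    rw [← ZMod.intCast_zmod_eq_zero_iff_dvd]
    push_cast
    rw [ZMod.wilsons_lemma]
    ring
  rw [wilsonQuotient, Int.mul_ediv_cancel' hdvd]

lemma fermat_eq {a : ℕ} (ha : ¬ p ∣ a) :
    (a : ℤ) ^ (p - 1) = 1 + p * fermatQuotient p a := by
  have hdvd : (p : ℤ) ∣ (a : ℤ) ^ (p - 1) - 1 := by
    rw [← ZMod.intCast_zmod_eq_zero_iff_dvd]
    push_cast
    rw [ZMod.pow_card_sub_one_eq_one (by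
      simpa [Ne, ZMod.natCast_eq_zero_iff] using ha)]
    ring
  rw [fermatQuotient, Int.mul_ediv_cancel' hdvd]
  ring

lemma lerch_aux (hodd : Odd p) :
    ∃ t : ℤ, (∑ a ∈ Icc 1 (p - 1), (a : ℤ) ^ (p - 1))
      = (p : ℤ) - 1 + p * wilsonQuotient p + p ^ 2 * t := by
  have hp2 := hp.out.two_le
  have hnd : ∀ a ∈ Icc 1 (p - 1), ¬ p ∣ a := by
    intro a ha
    simp only [mem_Icc] at ha
    intro hdvd
    have := Nat.le_of_dvd (by omega) hdvd
    omega
  set Q : ℤ := ∑ a ∈ Icc 1 (p - 1), fermatQuotient p a with hQ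
  set W : ℤ := wilsonQuotient p with hW
  -- sum identity
  have hsum : (∑ a ∈ Icc 1 (p - 1), (a : ℤ) ^ (p - 1)) = (p : ℤ) - 1 + p * Q := by
    rw [Finset.sum_congr rfl (fun a ha => fermat_eq (hnd a ha)), Finset.sum_add_distrib,
      Finset.sum_const, ← Finset.mul_sum, Nat.card_Icc, nsmul_eq_mul, mul_one, ← hQ]
    have h1 : p - 1 + 1 - 1 = p - 1 := by omega
    rw [h1]
    push_cast [Nat.cast_sub (by omega : 1 ≤ p)]
    ring
  -- product identity over ℤ
  have hfac : (∏ a ∈ Icc 1 (p - 1), (a : ℤ)) = (Nat.factorial (p - 1) : ℤ) := by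
    rw [← Nat.cast_prod, ← Finset.Ico_add_one_right_eq_Icc, Finset.prod_Ico_id_eq_factorial]
  have hprod : ∏ a ∈ Icc 1 (p - 1), (1 + (p : ℤ) * fermatQuotient p a)
      = ((p : ℤ) * W - 1) ^ (p - 1) := by
    rw [← Finset.prod_congr rfl (fun a ha => fermat_eq (hnd a ha)), Finset.prod_pow, hfac, hW,
      wilson_eq]
    ring_nf
  -- cast to ZMod (p^2)
  have h2 := congrArg (fun x : ℤ => (x : ZMod (p ^ 2))) hprod
  simp only [Int.cast_prod, Int.cast_add, Int.cast_one, Int.cast_mul, Int.cast_natCast,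
    Int.cast_pow, Int.cast_sub] at h2
  rw [prod_one_add_mul] at h2
  have heven : Even (p - 1) := Nat.Odd.sub_odd hodd odd_one
  have hu : (-((p : ZMod (p ^ 2)) * (W : ZMod (p ^ 2)))) *
      (-((p : ZMod (p ^ 2)) * (W : ZMod (p ^ 2)))) = 0 := by
    linear_combination ((W : ZMod (p ^ 2)) * (W : ZMod (p ^ 2))) * zmod_p_sq (p := p)
  have h3 : ((p : ZMod (p ^ 2)) * (W : ZMod (p ^ 2)) - 1) ^ (p - 1)
      = 1 + ((p - 1 : ℕ) : ZMod (p ^ 2)) * (-((p : ZMod (p ^ 2)) * (W : ZMod (p ^ 2)))) := by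
    have hneg : (p : ZMod (p ^ 2)) * (W : ZMod (p ^ 2)) - 1
        = -(1 + (-((p : ZMod (p ^ 2)) * (W : ZMod (p ^ 2))))) := by ring
    rw [hneg, heven.neg_pow, one_add_pow _ hu]
  rw [h3] at h2
  have hcast : ((p - 1 : ℕ) : ZMod (p ^ 2)) = (p : ZMod (p ^ 2)) - 1 := by
    push_cast [Nat.cast_sub (by omega : 1 ≤ p)]
    ring
  rw [hcast] at h2
  have hQcast : ((Q : ℤ) : ZMod (p ^ 2))
      = ∑ a ∈ Icc 1 (p - 1), ((fermatQuotient p a : ℤ) : ZMod (p ^ 2)) := by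
    rw [hQ]
    push_cast
    rfl
  have h4 : ((p * (Q - W) : ℤ) : ZMod (p ^ 2)) = 0 := by
    push_cast
    linear_combination h2 - (W : ZMod (p ^ 2)) * zmod_p_sq (p := p)
      + (p : ZMod (p ^ 2)) * hQcast
  rw [ZMod.intCast_zmod_eq_zero_iff_dvd] at h4
  obtain ⟨t, ht⟩ := h4
  refine ⟨t, ?_⟩
  rw [hsum]
  push_cast at ht ⊢
  linarith
end Aux

section Aux2
variable {p : ℕ} [hp : Fact p.Prime]

lemma norm_int_eq_one {d : ℤ} (hnd : ¬ (p : ℤ) ∣ d) : ‖(d : ℚ_[p])‖ = 1 := by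
  have h1 : ‖(d : ℚ_[p])‖ ≤ 1 := Padic.norm_int_le_one _
  have h2 : ¬ ‖(d : ℚ_[p])‖ < 1 := fun hlt =>
    hnd ((Padic.norm_intCast_lt_one_iff (p := p) (k := d)).mp hlt)
  linarith [not_lt.mp h2]

lemma bernoulli_norm_le (m : ℕ) (hm : m + 1 < p) :
    ‖((bernoulli m : ℚ) : ℚ_[p])‖ ≤ 1 := by
  induction m using Nat.strong_induction_on with
  | _ m ih =>
    rcases Nat.eq_zero_or_pos m with rfl | hm0
    · simp [bernoulli_zero]
    · have hs := sum_bernoulli (m + 1)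
      rw [if_neg (by omega), Finset.sum_range_succ, Nat.choose_succ_self_right] at hs
      have hne : ((m : ℚ) + 1) ≠ 0 := by positivity
      have hBm : (bernoulli m : ℚ)
          = -(∑ k ∈ range m, ((m + 1).choose k : ℚ) * bernoulli k) / ((m : ℚ) + 1) := by
        rw [eq_div_iff hne]
        push_cast at hs
        linear_combination hs
      rw [hBm]
      push_cast
      rw [norm_div, norm_neg]
      have hden : ‖((m : ℚ_[p]) + 1)‖ = 1 := by
        have hnd : ¬ (p : ℤ) ∣ ((m : ℤ) + 1) := by
          intro h
          have := Int.le_of_dvd (by positivity) h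
          omega
        have := norm_int_eq_one (p := p) hnd
        push_cast at this
        exact this
      rw [hden, div_one]
      apply IsUltrametricDist.norm_sum_le_of_forall_le_of_nonneg zero_le_one
      intro k hk
      rw [mem_range] at hk
      calc ‖((m + 1).choose k : ℚ_[p]) * ((bernoulli k : ℚ) : ℚ_[p])‖
          = ‖((m + 1).choose k : ℚ_[p])‖ * ‖((bernoulli k : ℚ) : ℚ_[p])‖ := norm_mul _ _
        _ ≤ 1 * 1 := by
            apply mul_le_mul _ (ih k hk (by omega)) (norm_nonneg _) zero_le_one
            exact_mod_cast Padic.norm_int_le_one (((m + 1).choose k : ℤ))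
        _ = 1 := one_mul 1

lemma ratCongr_iff_norm (x : ℚ) :
    ratCongr p 1 x 0 ↔ ‖(x : ℚ_[p])‖ ≤ ((p : ℝ))⁻¹ := by
  constructor
  · rintro ⟨c, d, hd, h⟩
    rw [sub_zero, pow_one] at h
    rw [h]
    push_cast
    rw [norm_mul, norm_div, norm_int_eq_one hd, div_one, Padic.norm_p]
    calc ((p : ℝ))⁻¹ * ‖((c : ℤ) : ℚ_[p])‖ ≤ ((p : ℝ))⁻¹ * 1 :=
        mul_le_mul_of_nonneg_left (Padic.norm_int_le_one _) (by positivity)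
      _ = ((p : ℝ))⁻¹ := mul_one _
  · intro h
    rcases eq_or_ne x 0 with rfl | hx
    · refine ⟨0, 1, ?_, by simp⟩
      intro hdvd
      have := Int.le_of_dvd one_pos hdvd
      have := hp.out.two_le
      omega
    · have hxeq : ‖(x : ℚ_[p])‖ = ‖((x.num : ℤ) : ℚ_[p])‖ / ‖((x.den : ℕ) : ℚ_[p])‖ := by
        conv_lhs => rw [← Rat.num_div_den x]
        push_cast
        rw [norm_div]
      have hpden : ¬ p ∣ x.den := by
        intro hdvd
        have hnum : ¬ (p : ℤ) ∣ x.num := by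
          intro hn
          have h1 : p ∣ x.num.natAbs := by simpa using Int.natAbs_dvd_natAbs.mpr hn
          have := Nat.dvd_gcd h1 hdvd
          rw [x.reduced] at this
          exact hp.out.one_lt.ne' (Nat.dvd_one.mp this)
        have hnorm1 : ‖((x.num : ℤ) : ℚ_[p])‖ = 1 := norm_int_eq_one hnum
        have hdle : ‖((x.den : ℕ) : ℚ_[p])‖ ≤ 1 := by
          exact_mod_cast Padic.norm_int_le_one ((x.den : ℤ))
        have hdpos : 0 < ‖((x.den : ℕ) : ℚ_[p])‖ := by
          apply norm_pos_iff.mpr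
          exact_mod_cast Nat.cast_ne_zero.mpr x.den_nz
        have h1le : (1 : ℝ) ≤ ‖(x : ℚ_[p])‖ := by
          rw [hxeq, hnorm1, le_div_iff₀ hdpos]
          simpa using hdle
        have hplt : ((p : ℝ))⁻¹ < 1 := by
          apply inv_lt_one_of_one_lt₀
          exact_mod_cast hp.out.one_lt
        linarith
      have hdnorm : ‖((x.den : ℕ) : ℚ_[p])‖ = 1 := by
        have : ¬ (p : ℤ) ∣ (x.den : ℤ) := fun hh => hpden (Int.natCast_dvd_natCast.mp hh)
        exact_mod_cast norm_int_eq_one this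
      have hnum_norm : ‖((x.num : ℤ) : ℚ_[p])‖ ≤ (p : ℝ)⁻¹ := by
        rw [hxeq, hdnorm, div_one] at h
        exact h
      have hdv : ((p : ℤ) ^ 1) ∣ x.num := by
        rw [← Padic.norm_int_le_pow_iff_dvd]
        simpa using hnum_norm
      rw [pow_one] at hdv
      obtain ⟨c, hc⟩ := hdv
      refine ⟨c, (x.den : ℤ), fun hh => hpden (Int.natCast_dvd_natCast.mp hh), ?_⟩
      rw [sub_zero, pow_one]
      conv_lhs => rw [← Rat.num_div_den x]
      rw [hc]
      push_cast
      ring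
end Aux2

theorem stmt_1 (p : ℕ) (hp : p.Prime) (hodd : Odd p) :
    IsWilsonPrime p ↔ ratCongr p 1 (bernoulli (p - 1) - 1 + 1 / (p : ℚ)) 0 := by
  haveI hfp : Fact p.Prime := ⟨hp⟩
  have hp3 : 3 ≤ p := by
    rcases Nat.eq_or_lt_of_le hp.two_le with h | h
    · exfalso
      rw [← h] at hodd
      exact (by decide : ¬ Odd 2) hodd
    · omega
  have hq0 : (0 : ℝ) < ((p : ℝ))⁻¹ := by
    have : (0 : ℝ) < p := by exact_mod_cast hp.pos
    positivity
  have hq1 : ((p : ℝ))⁻¹ ≤ 1 := by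
    apply inv_le_one_of_one_le₀
    exact_mod_cast hp.one_le
  have hpne : ((p : ℚ_[p])) ≠ 0 := Nat.cast_ne_zero.mpr hp.pos.ne'
  -- Faulhaber cast to ℚ_[p]
  have hF := sum_range_pow p (p - 1)
  rw [Nat.sub_add_cancel hp.one_le] at hF
  have hF2 := congrArg (fun q : ℚ => (q : ℚ_[p])) hF
  simp only [Rat.cast_sum, Rat.cast_pow, Rat.cast_natCast, Rat.cast_div, Rat.cast_mul,
    Rat.cast_add, Rat.cast_one] at hF2
  have hd : (((p - 1 : ℕ)) : ℚ_[p]) + 1 = (p : ℚ_[p]) := by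
    push_cast [Nat.cast_sub hp.one_le]
    ring
  rw [hd] at hF2
  -- LHS = integer sum
  have hins : range p = insert 0 (Icc 1 (p - 1)) := by
    ext x
    simp only [Finset.mem_range, Finset.mem_insert, Finset.mem_Icc]
    omega
  have hL : (∑ k ∈ range p, (k : ℚ_[p]) ^ (p - 1))
      = ((∑ a ∈ Icc 1 (p - 1), (a : ℤ) ^ (p - 1) : ℤ) : ℚ_[p]) := by
    push_cast
    rw [hins, Finset.sum_insert (by simp)]
    simp [zero_pow (show p - 1 ≠ 0 by omega)]
  -- split top term
  have hsplit := Finset.sum_range_succ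
    (fun i => ((bernoulli i : ℚ) : ℚ_[p]) * ((p.choose i : ℕ) : ℚ_[p]) * (p : ℚ_[p]) ^ (p - i)
      / (p : ℚ_[p])) (p - 1)
  rw [Nat.sub_add_cancel hp.one_le] at hsplit
  have htop : ((bernoulli (p - 1) : ℚ) : ℚ_[p]) * ((p.choose (p - 1) : ℕ) : ℚ_[p])
        * (p : ℚ_[p]) ^ (p - (p - 1)) / (p : ℚ_[p])
      = (p : ℚ_[p]) * ((bernoulli (p - 1) : ℚ) : ℚ_[p]) := by
    have hc : p.choose (p - 1) = p := by
      rw [Nat.choose_symm hp.one_le, Nat.choose_one_right]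
    have he : p - (p - 1) = 1 := by omega
    rw [hc, he, pow_one]
    field_simp
  -- bound on lower terms
  have hRbound : ‖∑ i ∈ range (p - 1),
      ((bernoulli i : ℚ) : ℚ_[p]) * ((p.choose i : ℕ) : ℚ_[p]) * (p : ℚ_[p]) ^ (p - i)
        / (p : ℚ_[p])‖ ≤ ((p : ℝ))⁻¹ ^ 2 := by
    apply IsUltrametricDist.norm_sum_le_of_forall_le_of_nonneg (by positivity)
    intro i hi
    rw [mem_range] at hi
    have hrw : ((bernoulli i : ℚ) : ℚ_[p]) * ((p.choose i : ℕ) : ℚ_[p]) * (p : ℚ_[p]) ^ (p - i)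
          / (p : ℚ_[p])
        = ((bernoulli i : ℚ) : ℚ_[p]) * ((p.choose i : ℕ) : ℚ_[p])
          * (p : ℚ_[p]) ^ (p - i - 1) := by
      have hpow : (p : ℚ_[p]) ^ (p - i) = (p : ℚ_[p]) ^ (p - i - 1) * (p : ℚ_[p]) := by
        rw [← pow_succ]
        congr 1
        omega
      rw [hpow]
      field_simp
    rw [hrw, norm_mul, norm_mul, norm_pow, Padic.norm_p]
    have hB : ‖((bernoulli i : ℚ) : ℚ_[p])‖ ≤ 1 := bernoulli_norm_le i (by omega)
    rcases Nat.eq_zero_or_pos i with rfl | hi0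
    · have hC : ‖((p.choose 0 : ℕ) : ℚ_[p])‖ ≤ 1 := by
        exact_mod_cast Padic.norm_int_le_one ((p.choose 0 : ℤ))
      have hexp : ((p : ℝ))⁻¹ ^ (p - 0 - 1) ≤ ((p : ℝ))⁻¹ ^ 2 :=
        pow_le_pow_of_le_one hq0.le hq1 (by omega)
      calc ‖((bernoulli 0 : ℚ) : ℚ_[p])‖ * ‖((p.choose 0 : ℕ) : ℚ_[p])‖ * ((p : ℝ))⁻¹ ^ (p - 0 - 1)
          ≤ 1 * 1 * ((p : ℝ))⁻¹ ^ 2 := by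
            apply mul_le_mul (by apply mul_le_mul hB hC (norm_nonneg _) zero_le_one) hexp
              (by positivity) (by norm_num)
        _ = ((p : ℝ))⁻¹ ^ 2 := by ring
    · have hpc : (p : ℤ) ∣ (p.choose i : ℤ) := by
        exact_mod_cast hp.dvd_choose_self (by omega) (by omega)
      obtain ⟨c, hc⟩ := hpc
      have hC : ‖((p.choose i : ℕ) : ℚ_[p])‖ ≤ ((p : ℝ))⁻¹ := by
        have : ((p.choose i : ℕ) : ℚ_[p]) = ((p : ℤ) * c : ℤ) := by
          rw [← hc]
          push_cast
          ring
        rw [this]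
        push_cast
        rw [norm_mul, Padic.norm_p]
        calc ((p : ℝ))⁻¹ * ‖((c : ℤ) : ℚ_[p])‖ ≤ ((p : ℝ))⁻¹ * 1 :=
            mul_le_mul_of_nonneg_left (Padic.norm_int_le_one _) hq0.le
          _ = ((p : ℝ))⁻¹ := mul_one _
      have hexp : ((p : ℝ))⁻¹ ^ (p - i - 1) ≤ ((p : ℝ))⁻¹ ^ 1 :=
        pow_le_pow_of_le_one hq0.le hq1 (by omega)
      calc ‖((bernoulli i : ℚ) : ℚ_[p])‖ * ‖((p.choose i : ℕ) : ℚ_[p])‖ * ((p : ℝ))⁻¹ ^ (p - i - 1)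
          ≤ 1 * ((p : ℝ))⁻¹ * ((p : ℝ))⁻¹ ^ 1 := by
            apply mul_le_mul (by apply mul_le_mul hB hC (norm_nonneg _) zero_le_one) hexp
              (by positivity) (by positivity)
        _ = ((p : ℝ))⁻¹ ^ 2 := by ring
  -- Lerch congruence
  obtain ⟨t, ht⟩ := lerch_aux (p := p) hodd
  have ht2 : ((∑ a ∈ Icc 1 (p - 1), (a : ℤ) ^ (p - 1) : ℤ) : ℚ_[p])
      = (p : ℚ_[p]) - 1 + (p : ℚ_[p]) * ((wilsonQuotient p : ℤ) : ℚ_[p])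
        + (p : ℚ_[p]) ^ 2 * ((t : ℤ) : ℚ_[p]) := by
    rw [ht]
    push_cast
    ring
  -- key algebraic identity
  set X : ℚ_[p] := ((bernoulli (p - 1) : ℚ) : ℚ_[p]) - 1 + (p : ℚ_[p])⁻¹ with hXdef
  set w : ℚ_[p] := ((wilsonQuotient p : ℤ) : ℚ_[p]) with hwdef
  have hinv : (p : ℚ_[p]) * (p : ℚ_[p])⁻¹ = 1 := mul_inv_cancel₀ hpne
  have hA : ((∑ a ∈ Icc 1 (p - 1), (a : ℤ) ^ (p - 1) : ℤ) : ℚ_[p])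
      = (∑ i ∈ range (p - 1),
          ((bernoulli i : ℚ) : ℚ_[p]) * ((p.choose i : ℕ) : ℚ_[p]) * (p : ℚ_[p]) ^ (p - i)
            / (p : ℚ_[p]))
        + (p : ℚ_[p]) * ((bernoulli (p - 1) : ℚ) : ℚ_[p]) := by
    rw [← hL, hF2, hsplit, htop]
  have hkey : (p : ℚ_[p]) * (X - w)
      = (p : ℚ_[p]) ^ 2 * ((t : ℤ) : ℚ_[p])
        - ∑ i ∈ range (p - 1),
            ((bernoulli i : ℚ) : ℚ_[p]) * ((p.choose i : ℕ) : ℚ_[p]) * (p : ℚ_[p]) ^ (p - i)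
              / (p : ℚ_[p]) := by
    rw [hXdef, hwdef]
    linear_combination ht2 - hA + hinv
  -- norm bound
  have hnorm_key : ‖X - w‖ ≤ ((p : ℝ))⁻¹ := by
    have h1 : ‖(p : ℚ_[p]) * (X - w)‖ ≤ ((p : ℝ))⁻¹ ^ 2 := by
      rw [hkey, sub_eq_add_neg]
      apply (Padic.nonarchimedean _ _).trans
      apply max_le
      · rw [norm_mul, norm_pow, Padic.norm_p]
        calc ((p : ℝ))⁻¹ ^ 2 * ‖((t : ℤ) : ℚ_[p])‖ ≤ ((p : ℝ))⁻¹ ^ 2 * 1 :=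
            mul_le_mul_of_nonneg_left (Padic.norm_int_le_one _) (by positivity)
          _ = ((p : ℝ))⁻¹ ^ 2 := mul_one _
      · rw [norm_neg]
        exact hRbound
    rw [norm_mul, Padic.norm_p] at h1
    have h2 : ((p : ℝ))⁻¹ * ‖X - w‖ ≤ ((p : ℝ))⁻¹ * ((p : ℝ))⁻¹ := by
      calc ((p : ℝ))⁻¹ * ‖X - w‖ ≤ ((p : ℝ))⁻¹ ^ 2 := h1
        _ = ((p : ℝ))⁻¹ * ((p : ℝ))⁻¹ := sq _
    exact le_of_mul_le_mul_left h2 hq0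
  -- conclude
  have hWiff : IsWilsonPrime p ↔ ‖w‖ ≤ ((p : ℝ))⁻¹ := by
    rw [IsWilsonPrime, hwdef]
    rw [show ((p : ℤ)) = (p : ℤ) ^ 1 by ring]
    rw [← Padic.norm_int_le_pow_iff_dvd (wilsonQuotient p) 1]
    have : ((p : ℝ) ^ (-(1 : ℕ) : ℤ)) = ((p : ℝ))⁻¹ := by simp
    rw [this]
  have hXc : ((bernoulli (p - 1) - 1 + 1 / (p : ℚ) : ℚ) : ℚ_[p]) = X := by
    rw [hXdef]
    push_cast
    ring
  rw [hWiff, ratCongr_iff_norm, hXc]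
  constructor
  · intro h
    calc ‖X‖ = ‖(X - w) + w‖ := by ring_nf
      _ ≤ max ‖X - w‖ ‖w‖ := Padic.nonarchimedean _ _
      _ ≤ ((p : ℝ))⁻¹ := max_le hnorm_key h
  · intro h
    calc ‖w‖ = ‖(w - X) + X‖ := by ring_nf
      _ ≤ max ‖w - X‖ ‖X‖ := Padic.nonarchimedean _ _
      _ ≤ ((p : ℝ))⁻¹ := max_le (by rw [norm_sub_rev]; exact hnorm_key) h
end

section
/- Let p be a prime with p > 3. Then p is a Lerch prime if and only if W_p ≡ B_{p−1} − 1 + 1/p (mod p²) as rational numbers. -/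
open Finset

/-- The `p`-integral rationals: `x = c/d` with `p ∤ d`. -/
def PInt (p : ℕ) (x : ℚ) : Prop := ∃ c d : ℤ, ¬ (p : ℤ) ∣ d ∧ x = (c : ℚ) / (d : ℚ)

namespace PInt

variable {p : ℕ}

lemma ne_zero_of_not_dvd {d : ℤ} (hd : ¬ (p : ℤ) ∣ d) : (d : ℚ) ≠ 0 := by
  intro h
  have hd0 : d = 0 := by exact_mod_cast h
  exact hd (hd0 ▸ dvd_zero _)

lemma intCast (hp : p.Prime) (n : ℤ) : PInt p (n : ℚ) :=
  ⟨n, 1, fun h => (Nat.prime_iff_prime_int.mp hp).not_dvd_one h, by simp⟩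

lemma natCast (hp : p.Prime) (n : ℕ) : PInt p (n : ℚ) := by
  simpa using intCast hp (n : ℤ)

lemma zero (hp : p.Prime) : PInt p 0 := by simpa using intCast hp 0

lemma add (hp : p.Prime) {x y : ℚ} (hx : PInt p x) (hy : PInt p y) : PInt p (x + y) := by
  obtain ⟨a, b, hb, rfl⟩ := hx
  obtain ⟨c, d, hd, rfl⟩ := hy
  have hpi := Nat.prime_iff_prime_int.mp hp
  refine ⟨a * d + b * c, b * d, fun h => ?_, ?_⟩
  · rcases hpi.dvd_mul.mp h with h | h
    exacts [hb h, hd h]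
  · rw [div_add_div _ _ (ne_zero_of_not_dvd hb) (ne_zero_of_not_dvd hd)]
    push_cast
    ring_nf

lemma neg {x : ℚ} (hx : PInt p x) : PInt p (-x) := by
  obtain ⟨a, b, hb, rfl⟩ := hx
  exact ⟨-a, b, hb, by push_cast; ring⟩

lemma sub (hp : p.Prime) {x y : ℚ} (hx : PInt p x) (hy : PInt p y) : PInt p (x - y) := by
  simpa [sub_eq_add_neg] using add hp hx hy.neg

lemma mul (hp : p.Prime) {x y : ℚ} (hx : PInt p x) (hy : PInt p y) : PInt p (x * y) := by
  obtain ⟨a, b, hb, rfl⟩ := hx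
  obtain ⟨c, d, hd, rfl⟩ := hy
  have hpi := Nat.prime_iff_prime_int.mp hp
  refine ⟨a * c, b * d, fun h => ?_, ?_⟩
  · rcases hpi.dvd_mul.mp h with h | h
    exacts [hb h, hd h]
  · rw [div_mul_div_comm]; push_cast; ring_nf

lemma div_int (hp : p.Prime) {x : ℚ} (hx : PInt p x) {n : ℤ} (hn : ¬ (p:ℤ) ∣ n) :
    PInt p (x / n) := by
  obtain ⟨a, b, hb, rfl⟩ := hx
  have hpi := Nat.prime_iff_prime_int.mp hp
  refine ⟨a, b * n, fun h => ?_, ?_⟩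
  · rcases hpi.dvd_mul.mp h with h | h
    exacts [hb h, hn h]
  · rw [div_div]; push_cast; ring_nf

lemma sum (hp : p.Prime) {α : Type*} (s : Finset α) (f : α → ℚ)
    (h : ∀ a ∈ s, PInt p (f a)) : PInt p (∑ a ∈ s, f a) :=
  Finset.sum_induction f (PInt p) (fun _ _ => add hp) (zero hp) h

end PInt

lemma not_dvd_of_lt {p : ℕ} (hp : p.Prime) {n : ℕ} (h0 : 0 < n) (h : n < p) :
    ¬ (p : ℤ) ∣ (n : ℤ) := by
  intro hd
  have := Int.le_of_dvd (by exact_mod_cast h0) hd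
  omega

lemma pint_bernoulli {p : ℕ} (hp : p.Prime) : ∀ m, m + 1 < p → PInt p (bernoulli m) := by
  intro m
  induction m using Nat.strong_induction_on with
  | _ m ih =>
    intro hm
    have h := sum_bernoulli (m + 1)
    rw [Finset.sum_range_succ, Nat.choose_succ_self_right] at h
    have hm1 : ((m : ℚ) + 1) ≠ 0 := by positivity
    have hb : bernoulli m = ((if m + 1 = 1 then (1:ℚ) else 0)
        - ∑ i ∈ range m, ((m+1).choose i : ℚ) * bernoulli i) / (m + 1) := by
      rw [eq_div_iff hm1]
      push_cast at h ⊢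
      linarith [h]
    rw [hb]
    have hnd : ¬ (p:ℤ) ∣ ((m : ℤ) + 1) := by
      have := not_dvd_of_lt hp (Nat.succ_pos m) hm
      push_cast at this ⊢
      exact this
    have : ((m : ℚ) + 1) = (((m : ℤ) + 1 : ℤ) : ℚ) := by push_cast; ring
    rw [this]
    refine PInt.div_int hp ?_ hnd
    refine PInt.sub hp ?_ (PInt.sum hp _ _ fun i hi => ?_)
    · split
      · simpa using PInt.natCast hp 1
      · exact PInt.zero hp
    · exact PInt.mul hp (PInt.natCast hp _) (ih i (mem_range.mp hi) (by have := mem_range.mp hi; omega))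

lemma key_pint {p : ℕ} (hp : p.Prime) (hp3 : 3 < p) :
    PInt p ((∑ k ∈ range p, (k : ℚ) ^ (p - 1) - p * bernoulli (p - 1)) / (p : ℚ) ^ 3) := by
  obtain ⟨n, rfl⟩ : ∃ n, p = n + 1 := ⟨p - 1, by omega⟩
  simp only [Nat.add_sub_cancel]
  have hp0 : ((n : ℚ) + 1) ≠ 0 := by positivity
  have hodd : Odd (n + 1) := hp.odd_of_ne_two (by omega)
  have hs := sum_range_pow (n + 1) n
  rw [Finset.sum_range_succ (fun i => bernoulli i * ((n+1).choose i : ℚ) * ((n+1 : ℕ) : ℚ) ^ (n+1-i) / ((n : ℚ)+1)),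
    Nat.choose_succ_self_right, Nat.add_sub_cancel_left] at hs
  have htop : bernoulli n * ((n+1 : ℕ) : ℚ) * ((n+1 : ℕ) : ℚ) ^ 1 / ((n : ℚ)+1)
      = ((n+1 : ℕ) : ℚ) * bernoulli n := by
    push_cast
    field_simp
  rw [htop] at hs
  have hsub : ∑ k ∈ range (n+1), (k : ℚ) ^ n - ((n+1 : ℕ) : ℚ) * bernoulli n
      = ∑ i ∈ range n, bernoulli i * (((n+1).choose i : ℕ) : ℚ) * ((n+1 : ℕ) : ℚ) ^ (n+1-i) / ((n : ℚ)+1) := by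
    rw [hs]; ring
  rw [hsub, Finset.sum_div]
  refine PInt.sum hp _ _ fun i hi => ?_
  have hi' : i < n := mem_range.mp hi
  rcases Nat.eq_zero_or_pos i with rfl | hipos
  · have he : bernoulli 0 * (((n+1).choose 0 : ℕ) : ℚ) * ((n+1 : ℕ) : ℚ) ^ (n+1-0) / ((n : ℚ)+1) / ((n+1 : ℕ) : ℚ)^3
        = (((n+1) ^ (n - 3) : ℕ) : ℚ) := by
      rw [bernoulli_zero, Nat.choose_zero_right, show n + 1 - 0 = (n - 3) + 4 by omega]
      push_cast
      rw [pow_add]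
      field_simp
    rw [he]; exact PInt.natCast hp _
  rcases eq_or_ne i (n - 1) with rfl | hne
  · have hoddi : Odd (n - 1) := by
      obtain ⟨t, ht⟩ := hodd
      exact ⟨t - 1, by omega⟩
    have hb0 : bernoulli (n - 1) = 0 := by
      rw [bernoulli_eq_bernoulli'_of_ne_one (by omega)]
      exact bernoulli'_eq_zero_of_odd hoddi (by omega)
    rw [hb0]
    simpa using PInt.zero hp
  · have hile : i ≤ n - 2 := by omega
    obtain ⟨c, hc⟩ := hp.dvd_choose_self (by omega : i ≠ 0) (by omega : i < n + 1)
    have he : bernoulli i * (((n+1).choose i : ℕ) : ℚ) * ((n+1 : ℕ) : ℚ) ^ (n+1-i) / ((n : ℚ)+1) / ((n+1 : ℕ) : ℚ)^3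
        = bernoulli i * ((c : ℚ) * (((n+1) ^ (n - 2 - i) : ℕ) : ℚ)) := by
      rw [hc, show n + 1 - i = (n - 2 - i) + 3 by omega]
      push_cast
      rw [pow_add]
      field_simp
    rw [he]
    exact PInt.mul hp (pint_bernoulli hp i (by omega))
      (PInt.mul hp (PInt.natCast hp c) (PInt.natCast hp _))

lemma wilson_mul {p : ℕ} (hp : p.Prime) :
    (p : ℤ) * wilsonQuotient p = (Nat.factorial (p - 1) : ℤ) + 1 := by
  haveI := Fact.mk hp
  have hd : (p : ℤ) ∣ ((Nat.factorial (p - 1) : ℤ) + 1) := by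
    rw [← ZMod.intCast_zmod_eq_zero_iff_dvd]
    push_cast
    rw [ZMod.wilsons_lemma]
    ring
  exact Int.mul_ediv_cancel' hd

lemma fermat_mul {p : ℕ} (hp : p.Prime) {a : ℕ} (h1 : 1 ≤ a) (h2 : a ≤ p - 1) :
    (p : ℤ) * fermatQuotient p a = (a : ℤ) ^ (p - 1) - 1 := by
  haveI := Fact.mk hp
  have ha : (a : ZMod p) ≠ 0 := by
    rw [Ne, ZMod.natCast_eq_zero_iff]
    intro hd
    have := Nat.le_of_dvd (by omega) hd
    omega
  have hd : (p : ℤ) ∣ ((a : ℤ) ^ (p - 1) - 1) := by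
    rw [← ZMod.intCast_zmod_eq_zero_iff_dvd]
    push_cast
    rw [ZMod.pow_card_sub_one_eq_one ha]
    ring
  exact Int.mul_ediv_cancel' hd

lemma ratCongr_iff_pint {p k : ℕ} (hp : p.Prime) (x y : ℚ) :
    ratCongr p k x y ↔ PInt p ((x - y) / (p : ℚ) ^ k) := by
  have hp0 : ((p : ℚ)) ^ k ≠ 0 := by
    have : (0:ℚ) < p := by exact_mod_cast hp.pos
    positivity
  constructor
  · rintro ⟨c, d, hd, he⟩
    have hd0 : (d : ℚ) ≠ 0 := fun h =>
      hd (by rw [show d = 0 by exact_mod_cast h]; exact dvd_zero _)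
    exact ⟨c, d, hd, by rw [he]; field_simp⟩
  · rintro ⟨c, d, hd, he⟩
    refine ⟨c, d, hd, ?_⟩
    have : x - y = (x - y) / (p:ℚ)^k * (p:ℚ)^k := by field_simp
    rw [this, he]; ring

lemma int_pint_iff {p : ℕ} (hp : p.Prime) (z : ℤ) (k : ℕ) :
    PInt p ((z : ℚ) / (p : ℚ) ^ k) ↔ (p : ℤ) ^ k ∣ z := by
  have hp0 : ((p : ℚ)) ≠ 0 := by exact_mod_cast hp.pos.ne'
  constructor
  · rintro ⟨c, d, hd, he⟩
    have hd0 : (d : ℚ) ≠ 0 := fun h =>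
      hd (by rw [show d = 0 by exact_mod_cast h]; exact dvd_zero _)
    have hpk0 : ((p : ℚ)) ^ k ≠ 0 := by positivity
    rw [div_eq_div_iff hpk0 hd0] at he
    have h2 : z * d = (p : ℤ) ^ k * c := by
      have : (z : ℚ) * d = ((p : ℤ) ^ k * c : ℤ) := by push_cast; linarith [he]
      exact_mod_cast this
    have hco : IsCoprime ((p : ℤ) ^ k) d :=
      ((Nat.prime_iff_prime_int.mp hp).coprime_iff_not_dvd.mpr hd).pow_left
    exact hco.dvd_of_dvd_mul_right ⟨c, h2⟩
  · rintro ⟨m, rfl⟩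
    exact ⟨m, 1, fun h => (Nat.prime_iff_prime_int.mp hp).not_dvd_one h, by push_cast; field_simp⟩

theorem stmt_8 (p : ℕ) (hp : p.Prime) (hp3 : 3 < p) :
    IsLerchPrime p ↔
      ratCongr p 2 ((wilsonQuotient p : ℚ))
        (bernoulli (p - 1) - 1 + 1 / (p : ℚ)) := by
  have hp0 : (p : ℚ) ≠ 0 := by
    have := hp.pos; positivity
  set Q : ℤ := ∑ a ∈ Icc 1 (p - 1), fermatQuotient p a with hQdef
  set W : ℤ := wilsonQuotient p with hWdef
  set S : ℚ := ∑ k ∈ range p, (k : ℚ) ^ (p - 1) with hSdef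
  set B : ℚ := bernoulli (p - 1) with hBdef
  have hZ : (p : ℤ) * Q = (∑ a ∈ Icc 1 (p - 1), (a : ℤ) ^ (p - 1)) - ((p : ℤ) - 1) := by
    rw [hQdef, Finset.mul_sum,
      Finset.sum_congr rfl fun a ha => fermat_mul hp (mem_Icc.mp ha).1 (mem_Icc.mp ha).2,
      Finset.sum_sub_distrib, Finset.sum_const, Nat.card_Icc]
    have hc : p - 1 + 1 - 1 = p - 1 := by omega
    rw [hc]
    simp only [nsmul_eq_mul, mul_one]
    rw [Nat.cast_sub hp.one_le]
    push_cast
    ring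
  have hSQ : S = ∑ a ∈ Icc 1 (p - 1), (a : ℚ) ^ (p - 1) := by
    rw [hSdef, range_eq_Ico, Finset.sum_eq_sum_Ico_succ_bot hp.pos]
    rw [show ((0 : ℕ) : ℚ) ^ (p - 1) = 0 by
      rw [Nat.cast_zero]; exact zero_pow (by omega), zero_add]
    congr 1
  have hQ : (Q : ℚ) = (S - ((p : ℚ) - 1)) / p := by
    rw [eq_div_iff hp0, hSQ]
    have h1 : (p : ℚ) * Q = (∑ a ∈ Icc 1 (p - 1), (a : ℚ) ^ (p - 1)) - ((p : ℚ) - 1) := by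
      exact_mod_cast hZ
    linear_combination h1
  have hA := key_pint hp hp3
  rw [show IsLerchPrime p ↔ (p : ℤ) ^ 2 ∣ Q - W from Iff.rfl,
    ← int_pint_iff hp (Q - W) 2, ratCongr_iff_pint hp]
  have hcast : ((Q - W : ℤ) : ℚ) / (p : ℚ) ^ 2 = ((Q : ℚ) - (W : ℚ)) / (p : ℚ) ^ 2 := by
    norm_cast
  rw [hcast]
  set X := ((Q : ℚ) - (W : ℚ)) / (p : ℚ) ^ 2 with hXdef
  set Y := ((W : ℚ) - (B - 1 + 1 / (p : ℚ))) / (p : ℚ) ^ 2 with hYdef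
  have hXY : X + Y = (S - p * B) / (p : ℚ) ^ 3 := by
    rw [hXdef, hYdef, hQ]
    field_simp
    ring
  constructor
  · intro h
    have := PInt.sub hp hA h
    rw [← hXY] at this
    simpa using this
  · intro h
    have := PInt.sub hp hA h
    rw [← hXY] at this
    simpa using this
end
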